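/- Let $R$ be a commutative ring, $G$, $H$ finite groups, $U$ a finite $(H,G)$-biset, and let $M, M'$ be functors $\mathcal{C}_U \to R\text{-}\mathsf{Mod}$. Then the $R$-module of natural transformations $M \to M'$ is isomorphic to $\prod_{u \in [H\backslash U/G]} \mathrm{Hom}_{RA(u)}(M(u), M'(u))$, where $[H\backslash U/G]$ is a set of orbit representatives and $A(u) = \{(h,g) \mid hu = ug\}$. -/

import Mathlib

open CategoryTheory MulOpposite

/-- An object wrapper: the objects of the category associated to an `(H,G)`-biset `U`
are the elements of `U`. -/
structure BisetCat (H G U : Type*) where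
  x : U

variable {H G U : Type*} [Group H] [Group G]
  [MulAction H U] [MulAction Gᵐᵒᵖ U] [SMulCommClass H Gᵐᵒᵖ U]

/-- The category associated to an `(H,G)`-biset `U`: objects are elements of `U`,
and morphisms `u ⟶ v` are pairs `(h,g)` with `h • u = v • g`; composition of
`(h,g) : u ⟶ v` and `(h',g') : v ⟶ w` is `(h'*h, g'*g)` and the identity is `(1,1)`. -/
instance bisetCategory : Category (BisetCat H G U) where
  Hom u v := {p : H × G // p.1 • u.x = op p.2 • v.x}
  id u := ⟨(1, 1), by simp⟩
  comp {u v w} f g := ⟨(g.1.1 * f.1.1, g.1.2 * f.1.2), by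
    have hf := f.2; have hg := g.2
    calc (g.1.1 * f.1.1) • u.x = g.1.1 • (f.1.1 • u.x) := by rw [mul_smul]
    _ = g.1.1 • (op f.1.2 • v.x) := by rw [hf]
    _ = op f.1.2 • (g.1.1 • v.x) := by rw [smul_comm]
    _ = op f.1.2 • (op g.1.2 • w.x) := by rw [hg]
    _ = op (g.1.2 * f.1.2) • w.x := by rw [← mul_smul, ← op_mul]⟩
  id_comp f := Subtype.ext (by simp [Prod.ext_iff])
  comp_id f := Subtype.ext (by simp [Prod.ext_iff])
  assoc f g h := Subtype.ext (by simp [Prod.ext_iff, mul_assoc])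


/-- The stabilizer subgroup `A(u) = {(h,g) | h • u = u • g}` of `H × G`. -/
def Apt (H G : Type*) {U : Type*} [Group H] [Group G]
    [MulAction H U] [MulAction Gᵐᵒᵖ U] [SMulCommClass H Gᵐᵒᵖ U] (u : U) :
    Subgroup (H × G) where
  carrier := {p : H × G | p.1 • u = op p.2 • u}
  one_mem' := by simp
  mul_mem' := by
    intro a b ha hb
    show (a.1 * b.1) • u = op (a.2 * b.2) • u
    calc (a.1 * b.1) • u = a.1 • (b.1 • u) := mul_smul _ _ _
    _ = a.1 • (op b.2 • u) := by rw [hb]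
    _ = op b.2 • (a.1 • u) := smul_comm _ _ _
    _ = op b.2 • (op a.2 • u) := by rw [ha]
    _ = op (a.2 * b.2) • u := by rw [← mul_smul, ← op_mul]
  inv_mem' := by
    intro a ha
    show a.1⁻¹ • u = op (a.2⁻¹) • u
    have h1 : u = a.1⁻¹ • op a.2 • u := by
      rw [← ha, inv_smul_smul]
    calc a.1⁻¹ • u = a.1⁻¹ • (op a.2⁻¹ • op a.2 • u) := by
          rw [MulOpposite.op_inv, inv_smul_smul]
    _ = op a.2⁻¹ • (a.1⁻¹ • (op a.2 • u)) := by
          rw [smul_comm]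
    _ = op a.2⁻¹ • u := by rw [← h1]

universe u

variable {R : Type u} [CommRing R]

/-- The `R`-submodule of `RA(u)`-linear maps `M(u) → M'(u)`, i.e. `R`-linear maps
commuting with the action of `A(u) = {(h,g) | h • u = u • g}`. -/
def equivariantHom {H G U : Type u} [Group H] [Group G]
    [MulAction H U] [MulAction Gᵐᵒᵖ U] [SMulCommClass H Gᵐᵒᵖ U]
    (M M' : BisetCat H G U ⥤ ModuleCat.{u} R) (u : U) :
    Submodule R (M.obj ⟨u⟩ →ₗ[R] M'.obj ⟨u⟩) where
  carrier := {f | ∀ p : Apt H G u, ∀ m,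
    f (M.map (⟨(p : H × G), p.2⟩ : (⟨u⟩ : BisetCat H G U) ⟶ ⟨u⟩) m) =
      M'.map (⟨(p : H × G), p.2⟩ : (⟨u⟩ : BisetCat H G U) ⟶ ⟨u⟩) (f m)}
  add_mem' := by
    intro f g hf hg p m
    simp only [LinearMap.add_apply, map_add]
    rw [hf p, hg p]
  zero_mem' := by
    intro p m
    simp
  smul_mem' := by
    intro c f hf p m
    simp only [LinearMap.smul_apply, map_smul]
    rw [hf p]

section AuxLemmas

variable {H G U : Type*} [Group H] [Group G]
  [MulAction H U] [MulAction Gᵐᵒᵖ U] [SMulCommClass H Gᵐᵒᵖ U]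

/-- Inverse of a morphism in `BisetCat`. -/
def binv {a b : BisetCat H G U} (φ : a ⟶ b) : b ⟶ a :=
  ⟨(φ.1.1⁻¹, φ.1.2⁻¹), by
    have h := φ.2
    have hb : b.x = op φ.1.2⁻¹ • (φ.1.1 • a.x) := by
      rw [h, MulOpposite.op_inv, inv_smul_smul]
    calc φ.1.1⁻¹ • b.x = φ.1.1⁻¹ • (op φ.1.2⁻¹ • (φ.1.1 • a.x)) := by rw [← hb]
      _ = op φ.1.2⁻¹ • (φ.1.1⁻¹ • (φ.1.1 • a.x)) := by rw [smul_comm]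
      _ = op φ.1.2⁻¹ • a.x := by rw [inv_smul_smul]⟩

lemma comp_binv {a b : BisetCat H G U} (φ : a ⟶ b) : φ ≫ binv φ = 𝟙 a :=
  Subtype.ext (by show (φ.1.1⁻¹ * φ.1.1, φ.1.2⁻¹ * φ.1.2) = (1, 1); simp)

lemma binv_comp {a b : BisetCat H G U} (φ : a ⟶ b) : binv φ ≫ φ = 𝟙 b :=
  Subtype.ext (by show (φ.1.1 * φ.1.1⁻¹, φ.1.2 * φ.1.2⁻¹) = (1, 1); simp)

/-- A morphism from the relation `h • (op g • a) = b`. -/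
def morOfRel {a b : U} (h : H) (g : G) (hrel : h • (op g • a) = b) :
    (⟨a⟩ : BisetCat H G U) ⟶ ⟨b⟩ :=
  ⟨(h, g⁻¹), by
    show h • a = op g⁻¹ • b
    calc h • a = h • (op g⁻¹ • (op g • a)) := by
          rw [MulOpposite.op_inv, inv_smul_smul]
      _ = op g⁻¹ • (h • (op g • a)) := smul_comm _ _ _
      _ = op g⁻¹ • b := by rw [hrel]⟩

/-- A morphism gives the relation (in the reverse direction). -/
lemma rel_of_mor {a b : U} (φ : (⟨a⟩ : BisetCat H G U) ⟶ ⟨b⟩) :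
    ∃ (h : H) (g : G), h • (op g • b) = a := by
  refine ⟨φ.1.1⁻¹, φ.1.2, ?_⟩
  have h := φ.2
  show φ.1.1⁻¹ • (op φ.1.2 • b) = a
  rw [← h, inv_smul_smul]

variable {R : Type*} [CommRing R]

lemma map_comp_apply (F : BisetCat H G U ⥤ ModuleCat R) {a b c : BisetCat H G U}
    (f : a ⟶ b) (g : b ⟶ c) (m : F.obj a) : F.map (f ≫ g) m = F.map g (F.map f m) := by
  rw [F.map_comp]; rfl

lemma map_id_apply (F : BisetCat H G U ⥤ ModuleCat R) (a : BisetCat H G U)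
    (m : F.obj a) : F.map (𝟙 a) m = m := by
  rw [F.map_id]; rfl

end AuxLemmas

section Key

universe v

variable {R : Type v} [CommRing R] {H G U : Type v} [Group H] [Group G]
  [MulAction H U] [MulAction Gᵐᵒᵖ U] [SMulCommClass H Gᵐᵒᵖ U]
  (M M' : BisetCat H G U ⥤ ModuleCat.{v} R)

lemma equivariant_apply {w : U} {f : M.obj ⟨w⟩ →ₗ[R] M'.obj ⟨w⟩}
    (hf : f ∈ equivariantHom M M' w) (e : (⟨w⟩ : BisetCat H G U) ⟶ ⟨w⟩)
    (m : M.obj ⟨w⟩) : f (M.map e m) = M'.map e (f m) :=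
  hf ⟨e.1, e.2⟩ m

/-- The key transport lemma. -/
lemma key_transport {reps : Set U} (f : ∀ r : reps, equivariantHom M M' (r : U))
    {a b : U} (sa sb : reps) (θa : (⟨a⟩ : BisetCat H G U) ⟶ ⟨(sa : U)⟩)
    (θb : (⟨b⟩ : BisetCat H G U) ⟶ ⟨(sb : U)⟩)
    (φ : (⟨a⟩ : BisetCat H G U) ⟶ ⟨b⟩) (hab : sa = sb) (m : M.obj ⟨a⟩) :
    M'.map (binv θb) ((f sb : M.obj ⟨(sb : U)⟩ →ₗ[R] M'.obj ⟨(sb : U)⟩)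
        (M.map θb (M.map φ m))) =
      M'.map φ (M'.map (binv θa)
        ((f sa : M.obj ⟨(sa : U)⟩ →ₗ[R] M'.obj ⟨(sa : U)⟩) (M.map θa m))) := by
  subst hab
  set e : (⟨(sa : U)⟩ : BisetCat H G U) ⟶ ⟨(sa : U)⟩ := binv θa ≫ (φ ≫ θb) with he
  have h1 : M.map θb (M.map φ m) = M.map e (M.map θa m) := by
    rw [← map_comp_apply, ← map_comp_apply]
    congr 1
    simp only [he, ← Category.assoc, comp_binv, Category.id_comp]
  rw [h1, equivariant_apply M M' (f sa).2 e, ← map_comp_apply, ← map_comp_apply]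
  congr 1
  simp only [he, Category.assoc, comp_binv, Category.comp_id]

end Key

/-- The `R`-module of natural transformations `M ⟶ M'` is isomorphic to the product,
over orbit representatives `r`, of the modules of `RA(r)`-linear maps `M(r) → M'(r)`. -/
theorem natTrans_iso_prod_equivariantHom {H G U : Type u} [Group H] [Group G]
    [Finite H] [Finite G] [Finite U]
    [MulAction H U] [MulAction Gᵐᵒᵖ U] [SMulCommClass H Gᵐᵒᵖ U]
    (M M' : BisetCat H G U ⥤ ModuleCat.{u} R)
    (reps : Set U) (hreps : ∀ u : U, ∃! r : U, r ∈ reps ∧ ∃ (h : H) (g : G), h • (op g • u) = r) :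
    ∃ e : (M ⟶ M') ≃ₗ[R] (∀ r : reps, equivariantHom M M' (r : U)),
      ∀ (η : M ⟶ M') (r : reps), ((e η r : M.obj ⟨r⟩ →ₗ[R] M'.obj ⟨r⟩)) = (η.app ⟨(r : U)⟩).hom := by
  classical
  choose ρ hmem hh hg hrel using fun v : U => (hreps v).exists
  -- the chosen representative, as an element of `reps`
  set ρ' : U → reps := fun v => ⟨ρ v, hmem v⟩ with hρ'
  -- the chosen connecting morphism
  set θ : ∀ v : U, (⟨v⟩ : BisetCat H G U) ⟶ ⟨ρ v⟩ :=
    fun v => morOfRel (hh v) (hg v) (hrel v) with hθ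
  -- representatives are their own representatives
  have hfix : ∀ r : reps, ρ' (r : U) = r := by
    intro r
    obtain ⟨z, _, huniq⟩ := hreps (r : U)
    refine Subtype.ext ((huniq _ ⟨hmem _, hh _, hg _, hrel _⟩).trans
      (huniq (r : U) ⟨r.2, 1, 1, by simp⟩).symm)
  -- connected objects have the same representative
  have hsame : ∀ {a b : U}, ((⟨a⟩ : BisetCat H G U) ⟶ ⟨b⟩) → ρ' a = ρ' b := by
    intro a b φ
    obtain ⟨z, _, huniq⟩ := hreps a
    obtain ⟨h', g', hrel'⟩ := rel_of_mor (φ ≫ θ b)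
    refine Subtype.ext ((huniq _ ⟨hmem _, hh _, hg _, hrel _⟩).trans
      (huniq (ρ b) ?_).symm)
    exact ⟨hmem b, by
      obtain ⟨h'', g'', hrel''⟩ := rel_of_mor (binv (φ ≫ θ b))
      exact ⟨h'', g'', hrel''⟩⟩
  -- the forward map
  have Emem : ∀ (η : M ⟶ M') (r : reps),
      ((η.app ⟨(r : U)⟩).hom : M.obj ⟨(r : U)⟩ →ₗ[R] M'.obj ⟨(r : U)⟩) ∈
        equivariantHom M M' (r : U) := by
    intro η r p m
    have hnat := η.naturality
      (⟨((p : H × G)), p.2⟩ : (⟨(r : U)⟩ : BisetCat H G U) ⟶ ⟨(r : U)⟩)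
    have := congrArg (fun l => l m) hnat
    simpa only [ConcreteCategory.comp_apply] using this
  set E : (M ⟶ M') → (∀ r : reps, equivariantHom M M' (r : U)) :=
    fun η r => ⟨(η.app ⟨(r : U)⟩).hom, Emem η r⟩ with hE
  -- the backward map
  set B : (∀ r : reps, equivariantHom M M' (r : U)) → (M ⟶ M') := fun f =>
    { app := fun v => ModuleCat.ofHom ((M'.map (binv (θ v.x))).hom.comp
        (((f (ρ' v.x) : M.obj ⟨(ρ' v.x : U)⟩ →ₗ[R] M'.obj ⟨(ρ' v.x : U)⟩)).comp
          (M.map (θ v.x)).hom))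
      naturality := by
        intro a b φ
        apply ModuleCat.hom_ext
        apply LinearMap.ext
        intro m
        exact key_transport M M' f (ρ' a.x) (ρ' b.x) (θ a.x) (θ b.x) φ (hsame φ) m } with hB
  refine ⟨{ toFun := E
            invFun := B
            map_add' := by
              intro η η'
              funext r
              exact Subtype.ext (by simp [hE])
            map_smul' := by
              intro c η
              funext r
              exact Subtype.ext (by simp [hE])
            left_inv := by
              intro η
              ext v m
              show M'.map (binv (θ v.x)) ((η.app ⟨ρ v.x⟩) (M.map (θ v.x) m)) = η.app v m
              have hnat := congrArg (fun l => l m) (η.naturality (θ v.x))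
              simp only [ConcreteCategory.comp_apply] at hnat
              rw [show ((η.app ⟨ρ v.x⟩) (M.map (θ v.x) m))
                    = M'.map (θ v.x) (η.app ⟨v.x⟩ m) from hnat,
                ← map_comp_apply, comp_binv, map_id_apply]
            right_inv := by
              intro f
              funext r
              apply Subtype.ext
              apply LinearMap.ext
              intro m
              show M'.map (binv (θ (r : U)))
                ((f (ρ' (r : U)) : _ →ₗ[R] _) (M.map (θ (r : U)) m)) = (f r : _ →ₗ[R] _) m
              have := key_transport M M' f r (ρ' (r : U)) (𝟙 (⟨(r : U)⟩ : BisetCat H G U))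
                (θ (r : U)) (𝟙 (⟨(r : U)⟩ : BisetCat H G U)) (hfix r).symm m
              rw [map_id_apply] at this
              have hbid : binv (𝟙 (⟨(r : U)⟩ : BisetCat H G U)) = 𝟙 _ :=
                Subtype.ext (by show ((1:H)⁻¹, (1:G)⁻¹) = (1, 1); simp)
              rw [this]
              simp only [hbid, map_id_apply] },
    fun η r => rfl⟩
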